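/- Let q > 1 and δ > 0, and let f : [0,1] → ℝ be measurable. If ∫_0^1 ∫_0^1 (|f(x) − f(y)|^q / |x−y|) · (log(1/|x−y|))^{q−1+δ} dx dy < ∞, then Σ_{n=1}^{∞} ( 2^n ∫_0^1 ∫_0^1 1_{|x−y| ≤ 2^{-n}} |f(x) − f(y)|^q dx dy )^{1/q} < ∞. (Combined with the Jensen bound for the Bernoulli shift, this yields the convergence of Σ_n ‖E[f∘T^n | ℳ]‖_q.) -/

import Mathlib

open MeasureTheory Filter Topology
open scoped ENNReal NNReal

noncomputable section

lemma stmt18_cond_iff (r : ℝ) (hr : 0 < r) (n : ℕ) :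
    r ≤ ((2:ℝ)^(n+1))⁻¹ ↔ ((n:ℝ)+1) ≤ Real.logb 2 (1/r) := by
  have h2 : (0:ℝ) < 2^(n+1) := by positivity
  have h1 : r ≤ ((2:ℝ)^(n+1))⁻¹ ↔ (2:ℝ)^(n+1) ≤ 1/r := by
    rw [le_inv_comm₀ hr h2, one_div]
  rw [h1]
  have h3 : (2:ℝ)^(n+1) = (2:ℝ) ^ (((n:ℝ)+1) : ℝ) := by
    rw [show ((n:ℝ)+1) = ((n+1 : ℕ) : ℝ) by push_cast; ring, Real.rpow_natCast]
  rw [h3, ← Real.rpow_logb (x := 1/r) two_pos (by norm_num) (by positivity),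
    Real.rpow_le_rpow_left_iff one_lt_two, Real.logb_rpow two_pos (by norm_num)]

lemma stmt18_geom_bound (r : ℝ) (hr : 0 < r) (hr1 : r ≤ 1) :
    (∑' n : ℕ, (if r ≤ ((2:ℝ)^(n+1))⁻¹ then ENNReal.ofReal ((2:ℝ)^(n+1)) else 0))
      ≤ ENNReal.ofReal (2 / r) := by
  set L := Real.logb 2 (1/r) with hLdef
  have hL0 : 0 ≤ L := Real.logb_nonneg one_lt_two (by rw [le_div_iff₀ hr]; linarith)
  set N := ⌊L⌋₊ with hNdef
  have hiff : ∀ n : ℕ, (r ≤ ((2:ℝ)^(n+1))⁻¹) ↔ n < N := by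
    intro n
    rw [stmt18_cond_iff r hr n, ← hLdef, show ((n:ℝ)+1) = ((n+1 : ℕ) : ℝ) by push_cast; ring,
      ← Nat.le_floor_iff hL0, ← hNdef]
    omega
  have hsum : (∑' n : ℕ, (if r ≤ ((2:ℝ)^(n+1))⁻¹ then ENNReal.ofReal ((2:ℝ)^(n+1)) else 0))
      = ∑ n ∈ Finset.range N, ENNReal.ofReal ((2:ℝ)^(n+1)) := by
    rw [tsum_eq_sum (s := Finset.range N)]
    · exact Finset.sum_congr rfl fun n hn => if_pos ((hiff n).mpr (Finset.mem_range.mp hn))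
    · intro n hn
      exact if_neg (fun h => hn (Finset.mem_range.mpr ((hiff n).mp h)))
  rw [hsum, ← ENNReal.ofReal_sum_of_nonneg (fun n _ => by positivity)]
  apply ENNReal.ofReal_le_ofReal
  have hNle : (2:ℝ)^N ≤ 1/r := by
    have h1 : (2:ℝ)^N = (2:ℝ) ^ ((N:ℝ) : ℝ) := (Real.rpow_natCast 2 N).symm
    rw [h1, ← Real.rpow_logb (x := 1/r) two_pos (by norm_num) (by positivity)]
    exact Real.rpow_le_rpow_of_exponent_le one_le_two (Nat.floor_le hL0)
  have hgeom : ∑ n ∈ Finset.range N, (2:ℝ)^(n+1) = 2 * (2^N - 1) := by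
    have h := geom_sum_eq (by norm_num : (2:ℝ) ≠ 1) N
    calc ∑ n ∈ Finset.range N, (2:ℝ)^(n+1)
        = 2 * ∑ n ∈ Finset.range N, (2:ℝ)^n := by
          rw [Finset.mul_sum]; exact Finset.sum_congr rfl fun n _ => by ring
      _ = 2 * (2^N - 1) := by rw [h]; norm_num
  rw [hgeom]
  have h2N : (0:ℝ) < 2^N := by positivity
  rw [div_eq_mul_inv, ← one_div]
  nlinarith [hNle]

lemma stmt18_ptwise (q δ : ℝ) (hq : 1 < q) (hδ : 0 < δ) (a r : ℝ)
    (hr0 : 0 ≤ r) (hr1 : r ≤ 1) (hra : r = 0 → a = 0) :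
    (∑' n : ℕ, (ENNReal.ofReal (((n:ℝ)+1)^(q-1+δ)) * ENNReal.ofReal ((2:ℝ)^(n+1))) *
        (if r ≤ ((2:ℝ)^(n+1))⁻¹ then ENNReal.ofReal (|a|^q) else 0))
      ≤ ENNReal.ofReal (2 / Real.log 2 ^ (q-1+δ)) *
        ENNReal.ofReal (|a|^q / r * Real.log (1/r) ^ (q-1+δ)) := by
  have hq0 : (0:ℝ) < q := lt_trans one_pos hq
  set α := q - 1 + δ with hαdef
  have hα0 : 0 < α := by simp only [hαdef]; linarith
  rcases eq_or_lt_of_le hr0 with hrz | hrpos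
  · have ha : a = 0 := hra hrz.symm
    simp [ha, Real.zero_rpow hq0.ne']
  set L := Real.logb 2 (1/r) with hLdef
  have hL0 : 0 ≤ L := Real.logb_nonneg one_lt_two (by rw [le_div_iff₀ hrpos]; linarith)
  have hterm : ∀ n : ℕ,
      (ENNReal.ofReal (((n:ℝ)+1)^α) * ENNReal.ofReal ((2:ℝ)^(n+1))) *
        (if r ≤ ((2:ℝ)^(n+1))⁻¹ then ENNReal.ofReal (|a|^q) else 0)
      ≤ ENNReal.ofReal (L^α * |a|^q) *
        (if r ≤ ((2:ℝ)^(n+1))⁻¹ then ENNReal.ofReal ((2:ℝ)^(n+1)) else 0) := by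
    intro n
    by_cases hcond : r ≤ ((2:ℝ)^(n+1))⁻¹
    · simp only [if_pos hcond]
      have h1 : ((n:ℝ)+1) ≤ L := (stmt18_cond_iff r hrpos n).mp hcond
      have h3 : ((n:ℝ)+1)^α ≤ L^α := Real.rpow_le_rpow (by positivity) h1 hα0.le
      rw [← ENNReal.ofReal_mul (by positivity), ← ENNReal.ofReal_mul (by positivity),
        ← ENNReal.ofReal_mul (by positivity)]
      apply ENNReal.ofReal_le_ofReal
      calc ((n:ℝ)+1)^α * 2^(n+1) * |a|^q = ((n:ℝ)+1)^α * (2^(n+1) * |a|^q) := by ring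
        _ ≤ L^α * (2^(n+1) * |a|^q) := by
            apply mul_le_mul_of_nonneg_right h3 (by positivity)
        _ = L^α * |a|^q * 2^(n+1) := by ring
    · simp [if_neg hcond]
  calc (∑' n : ℕ, (ENNReal.ofReal (((n:ℝ)+1)^α) * ENNReal.ofReal ((2:ℝ)^(n+1))) *
        (if r ≤ ((2:ℝ)^(n+1))⁻¹ then ENNReal.ofReal (|a|^q) else 0))
      ≤ ∑' n : ℕ, ENNReal.ofReal (L^α * |a|^q) *
          (if r ≤ ((2:ℝ)^(n+1))⁻¹ then ENNReal.ofReal ((2:ℝ)^(n+1)) else 0) :=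
        ENNReal.tsum_le_tsum hterm
    _ = ENNReal.ofReal (L^α * |a|^q) * ∑' n : ℕ,
          (if r ≤ ((2:ℝ)^(n+1))⁻¹ then ENNReal.ofReal ((2:ℝ)^(n+1)) else 0) :=
        ENNReal.tsum_mul_left
    _ ≤ ENNReal.ofReal (L^α * |a|^q) * ENNReal.ofReal (2 / r) :=
        mul_le_mul_right (stmt18_geom_bound r hrpos hr1) _
    _ = ENNReal.ofReal (2 / Real.log 2 ^ α) *
          ENNReal.ofReal (|a|^q / r * Real.log (1/r) ^ α) := by
        rw [← ENNReal.ofReal_mul (by positivity), ← ENNReal.ofReal_mul (by positivity)]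
        congr 1
        have hlog2 : 0 < Real.log 2 := Real.log_pos one_lt_two
        have hlog : 0 ≤ Real.log (1/r) := Real.log_nonneg (by rw [le_div_iff₀ hrpos]; linarith)
        have hLeq : L = Real.log (1/r) / Real.log 2 := rfl
        rw [hLeq, Real.div_rpow hlog hlog2.le]
        have h1 : Real.log 2 ^ α ≠ 0 := by positivity
        field_simp

/-- **Lemma 3.3 (key estimate)**: if for some `q > 1` and `δ > 0`
`∫₀¹∫₀¹ (|f(x)-f(y)|^q/|x-y|) (log(1/|x-y|))^{q-1+δ} dx dy < ∞`, then
`∑_{n≥1} (2ⁿ ∫₀¹∫₀¹ 1_{|x-y| ≤ 2⁻ⁿ} |f(x)-f(y)|^q dx dy)^{1/q} < ∞`. -/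
theorem stmt18 (q δ : ℝ) (hq : 1 < q) (hδ : 0 < δ)
    (f : ℝ → ℝ) (hfmeas : Measurable f)
    (hreg : (∫⁻ x in Set.Icc (0 : ℝ) 1, ∫⁻ y in Set.Icc (0 : ℝ) 1,
        ENNReal.ofReal
          (|f x - f y| ^ q / |x - y| * Real.log (1 / |x - y|) ^ (q - 1 + δ))) < ⊤) :
    (∑' n : ℕ,
        (ENNReal.ofReal ((2 : ℝ) ^ (n + 1)) *
          ∫⁻ x in Set.Icc (0 : ℝ) 1, ∫⁻ y in Set.Icc (0 : ℝ) 1,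
            (if |x - y| ≤ ((2 : ℝ) ^ (n + 1))⁻¹ then ENNReal.ofReal (|f x - f y| ^ q)
              else 0)) ^ (1 / q)) < ⊤ := by
  have hq0 : (0:ℝ) < q := lt_trans one_pos hq
  set α := q - 1 + δ with hαdef
  have hα0 : 0 < α := by simp only [hαdef]; linarith
  set w : ℕ → ℝ≥0∞ := fun n => ENNReal.ofReal (((n:ℝ)+1)^α) with hwdef
  set c : ℕ → ℝ≥0∞ := fun n => ENNReal.ofReal ((2:ℝ)^(n+1)) with hcdef
  set T : ℕ → ℝ≥0∞ := fun n => ∫⁻ x in Set.Icc (0 : ℝ) 1, ∫⁻ y in Set.Icc (0 : ℝ) 1,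
      (if |x - y| ≤ ((2 : ℝ) ^ (n + 1))⁻¹ then ENNReal.ofReal (|f x - f y| ^ q)
        else 0) with hTdef
  set A : ℕ → ℝ≥0∞ := fun n => c n * T n with hAdef
  -- Measurability facts
  have hGmeas : ∀ n : ℕ, Measurable (fun p : ℝ × ℝ =>
      (w n * c n) * (if |p.1 - p.2| ≤ ((2:ℝ)^(n+1))⁻¹
        then ENNReal.ofReal (|f p.1 - f p.2|^q) else 0)) := by
    intro n
    apply Measurable.const_mul
    apply Measurable.ite
    · exact measurableSet_le (by fun_prop) measurable_const
    · apply Measurable.ennreal_ofReal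
      exact (Real.continuous_rpow_const hq0.le).measurable.comp
        (((hfmeas.comp measurable_fst).sub (hfmeas.comp measurable_snd)).abs)
    · exact measurable_const
  have hInner : ∀ n : ℕ, ∀ x : ℝ, Measurable (fun y : ℝ =>
      (w n * c n) * (if |x - y| ≤ ((2:ℝ)^(n+1))⁻¹
        then ENNReal.ofReal (|f x - f y|^q) else 0)) := by
    intro n x
    exact (hGmeas n).comp (measurable_prodMk_left)
  have hOuter : ∀ n : ℕ, Measurable (fun x : ℝ => ∫⁻ y in Set.Icc (0 : ℝ) 1,
      (w n * c n) * (if |x - y| ≤ ((2:ℝ)^(n+1))⁻¹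
        then ENNReal.ofReal (|f x - f y|^q) else 0)) := by
    intro n
    exact (hGmeas n).lintegral_prod_right'
  have hwne : ∀ n : ℕ, w n ≠ 0 := by
    intro n
    simp only [hwdef, ne_eq, ENNReal.ofReal_eq_zero, not_le]
    positivity
  have hwnt : ∀ n : ℕ, w n ≠ ⊤ := fun n => ENNReal.ofReal_ne_top
  have hcnt : ∀ n : ℕ, c n ≠ ⊤ := fun n => ENNReal.ofReal_ne_top
  have hwcnt : ∀ n : ℕ, w n * c n ≠ ⊤ := fun n =>
    ENNReal.mul_ne_top (hwnt n) (hcnt n)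
  -- Step 1 : weighted sum is finite
  have step1 : (∑' n : ℕ, w n * A n) < ⊤ := by
    have hcalc : (∑' n : ℕ, w n * A n)
        ≤ ENNReal.ofReal (2 / Real.log 2 ^ α) *
          ∫⁻ x in Set.Icc (0 : ℝ) 1, ∫⁻ y in Set.Icc (0 : ℝ) 1,
            ENNReal.ofReal
              (|f x - f y| ^ q / |x - y| * Real.log (1 / |x - y|) ^ α) := by
      calc (∑' n : ℕ, w n * A n)
          = ∑' n : ℕ, ∫⁻ x in Set.Icc (0 : ℝ) 1, ∫⁻ y in Set.Icc (0 : ℝ) 1,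
              (w n * c n) * (if |x - y| ≤ ((2:ℝ)^(n+1))⁻¹
                then ENNReal.ofReal (|f x - f y|^q) else 0) := by
            refine tsum_congr fun n => ?_
            rw [hAdef]
            simp only
            rw [← mul_assoc, hTdef]
            simp only
            rw [← lintegral_const_mul' _ _ (hwcnt n)]
            exact lintegral_congr fun x => (lintegral_const_mul' _ _ (hwcnt n)).symm
        _ = ∫⁻ x in Set.Icc (0 : ℝ) 1, ∫⁻ y in Set.Icc (0 : ℝ) 1,
              ∑' n : ℕ, (w n * c n) * (if |x - y| ≤ ((2:ℝ)^(n+1))⁻¹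
                then ENNReal.ofReal (|f x - f y|^q) else 0) := by
            rw [← lintegral_tsum (fun n => (hOuter n).aemeasurable)]
            exact lintegral_congr fun x =>
              (lintegral_tsum (fun n => (hInner n x).aemeasurable)).symm
        _ ≤ ∫⁻ x in Set.Icc (0 : ℝ) 1, ∫⁻ y in Set.Icc (0 : ℝ) 1,
              ENNReal.ofReal (2 / Real.log 2 ^ α) *
                ENNReal.ofReal
                  (|f x - f y| ^ q / |x - y| * Real.log (1 / |x - y|) ^ α) := by
            refine setLIntegral_mono' measurableSet_Icc fun x hx => ?_
            refine setLIntegral_mono' measurableSet_Icc fun y hy => ?_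
            have hxy0 : 0 ≤ |x - y| := abs_nonneg _
            have hxy1 : |x - y| ≤ 1 := by
              rw [abs_le]
              constructor <;>
                [linarith [hx.1, hx.2, hy.1, hy.2]; linarith [hx.1, hx.2, hy.1, hy.2]]
            have hxa : |x - y| = 0 → f x - f y = 0 := by
              intro h
              have : x = y := by
                have := abs_eq_zero.mp h; linarith
              rw [this]; ring
            exact stmt18_ptwise q δ hq hδ (f x - f y) |x - y| hxy0 hxy1 hxa
        _ = ENNReal.ofReal (2 / Real.log 2 ^ α) *
              ∫⁻ x in Set.Icc (0 : ℝ) 1, ∫⁻ y in Set.Icc (0 : ℝ) 1,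
                ENNReal.ofReal
                  (|f x - f y| ^ q / |x - y| * Real.log (1 / |x - y|) ^ α) := by
            rw [← lintegral_const_mul' _ _ ENNReal.ofReal_ne_top]
            exact lintegral_congr fun x =>
              (lintegral_const_mul' _ _ ENNReal.ofReal_ne_top)
    exact lt_of_le_of_lt hcalc
      (ENNReal.mul_lt_top ENNReal.ofReal_lt_top hreg)
  -- Step 2 : Hölder
  set p' : ℝ := Real.conjExponent q with hp'def
  have hpq : q.HolderConjugate p' := Real.HolderConjugate.conjExponent hq
  have hp'eq : p' = q / (q - 1) := rfl
  set φ : ℕ → ℝ≥0∞ := fun n => (w n * A n) ^ (1/q) with hφdef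
  set ψ : ℕ → ℝ≥0∞ := fun n => (w n) ^ (-(1/q)) with hψdef
  have hφψ : ∀ n : ℕ, φ n * ψ n = A n ^ (1/q) := by
    intro n
    rw [hφdef, hψdef]
    simp only
    rw [ENNReal.mul_rpow_of_nonneg _ _ (by positivity : (0:ℝ) ≤ 1/q)]
    rw [mul_right_comm, ← ENNReal.rpow_add _ _ (hwne n) (hwnt n)]
    norm_num
  have hφq : ∀ n : ℕ, φ n ^ q = w n * A n := by
    intro n
    rw [hφdef]
    simp only
    rw [← ENNReal.rpow_mul, one_div, inv_mul_cancel₀ hq0.ne', ENNReal.rpow_one]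
  have hq1 : q - 1 ≠ 0 := ne_of_gt (by linarith)
  have hψp' : ∀ n : ℕ, ψ n ^ p' = ENNReal.ofReal (((n:ℝ)+1) ^ (-(α / (q-1)))) := by
    intro n
    rw [hψdef]
    simp only
    rw [← ENNReal.rpow_mul, hwdef]
    simp only
    rw [ENNReal.ofReal_rpow_of_pos (by positivity)]
    congr 1
    rw [← Real.rpow_mul (by positivity)]
    congr 1
    rw [hp'eq]
    field_simp
  have hsummable : Summable (fun n : ℕ => ((n:ℝ)+1) ^ (-(α / (q-1)))) := by
    have hs1 : -(α/(q-1)) < -1 := by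
      have h1 : (1:ℝ) < α / (q-1) :=
        (one_lt_div (by linarith)).mpr (by simp only [hαdef]; linarith)
      linarith
    have h2 : Summable (fun n : ℕ => ((n:ℝ)) ^ (-(α/(q-1)))) :=
      Real.summable_nat_rpow.mpr hs1
    have h3 := (summable_nat_add_iff 1).mpr h2
    simpa using h3
  have hsecond : (∑' n : ℕ, ψ n ^ p') < ⊤ := by
    have heq2 : (∑' n : ℕ, ψ n ^ p')
        = ENNReal.ofReal (∑' n : ℕ, ((n:ℝ)+1) ^ (-(α / (q-1)))) := by
      rw [ENNReal.ofReal_tsum_of_nonneg (fun n => by positivity) hsummable]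
      exact tsum_congr hψp'
    rw [heq2]
    exact ENNReal.ofReal_lt_top
  have hholder := ENNReal.lintegral_mul_le_Lp_mul_Lq (Measure.count : Measure ℕ) hpq
      (measurable_of_countable φ).aemeasurable (measurable_of_countable ψ).aemeasurable
  rw [lintegral_count, lintegral_count, lintegral_count] at hholder
  show (∑' n : ℕ, A n ^ (1/q)) < ⊤
  have hfinal : (∑' n : ℕ, A n ^ (1/q))
      ≤ (∑' n : ℕ, w n * A n) ^ (1/q) * (∑' n : ℕ, ψ n ^ p') ^ (1/p') := by
    calc (∑' n : ℕ, A n ^ (1/q)) = ∑' n : ℕ, (φ * ψ) n :=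
          tsum_congr fun n => (hφψ n).symm
      _ ≤ (∑' n : ℕ, φ n ^ q) ^ (1/q) * (∑' n : ℕ, ψ n ^ p') ^ (1/p') := hholder
      _ = (∑' n : ℕ, w n * A n) ^ (1/q) * (∑' n : ℕ, ψ n ^ p') ^ (1/p') := by
          rw [tsum_congr hφq]
  exact lt_of_le_of_lt hfinal (ENNReal.mul_lt_top
    (ENNReal.rpow_lt_top_of_nonneg (by positivity) step1.ne)
    (ENNReal.rpow_lt_top_of_nonneg hpq.symm.one_div_nonneg hsecond.ne))
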